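/- Fix integers r ≥ 1, M ≥ 0 with 2^M > r. With λ_k = (1 + (1/(M+1)) ∑_{t=0}^{M} cos(2πk2^t/r))/2, for every k ∈ {1,…,r−1} one has λ_k ≤ 1 − 1/(2(M+1)). -/

import Mathlib

/-- Eigenvalue gap: if `2^M > r`, then for every `k ∈ {1,…,r−1}` the eigenvalue
`λ_k = (1 + (1/(M+1)) ∑_t cos(2πk2^t/r))/2` satisfies `λ_k ≤ 1 − 1/(2(M+1))`. -/
theorem stmt_6 (r M k : ℕ) (h2M : r < 2 ^ M) (hk1 : 1 ≤ k) (hk2 : k ≤ r - 1) :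
    (1 + (1 / ((M : ℝ) + 1)) *
        ∑ t ∈ Finset.range (M + 1), Real.cos (2 * Real.pi * k * 2 ^ t / r)) / 2
      ≤ 1 - 1 / (2 * ((M : ℝ) + 1)) := by
  have hr2 : 2 ≤ r := by omega
  set d : ℕ := min k (r - k) with hd
  have hdk : d ≤ k := min_le_left _ _
  have hdrk : d ≤ r - k := min_le_right _ _
  have hd1 : 1 ≤ d := by omega
  have h2d : 2 * d ≤ r := by omega
  have hrpos : (0:ℝ) < r := by positivity
  -- the cosine terms for k equal those for d
  have hcos : ∀ t : ℕ, Real.cos (2 * Real.pi * k * 2 ^ t / r)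
      = Real.cos (2 * Real.pi * d * 2 ^ t / r) := by
    intro t
    rcases min_cases k (r - k) with ⟨h1, _⟩ | ⟨h1, _⟩
    · rw [hd, h1]
    · have hk' : (k:ℝ) = r - d := by
        rw [hd, h1]
        push_cast [Nat.cast_sub (by omega : k ≤ r)]
        ring
      rw [hk']
      have : 2 * Real.pi * ((r:ℝ) - d) * 2 ^ t / r
          = (2 ^ t : ℕ) * (2 * Real.pi) - 2 * Real.pi * d * 2 ^ t / r := by
        push_cast
        field_simp
      rw [this, Real.cos_nat_mul_two_pi_sub]
  -- find t with d * 2^t ∈ [r/4, r/2]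
  have hP : r ≤ 4 * d * 2 ^ M := by
    calc r ≤ 2 ^ M := le_of_lt h2M
    _ ≤ 4 * d * 2 ^ M := by nlinarith [Nat.one_le_two_pow (n := M)]
  have hex : ∃ t, r ≤ 4 * d * 2 ^ t := ⟨M, hP⟩
  set t0 := Nat.find hex with ht0
  have hPt0 : r ≤ 4 * d * 2 ^ t0 := Nat.find_spec hex
  have ht0M : t0 ≤ M := by rw [ht0]; exact Nat.find_min' hex hP
  have hupper : 2 * (d * 2 ^ t0) ≤ r := by
    rcases Nat.eq_zero_or_pos t0 with h | h
    · simpa [h] using h2d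
    · have hlt : 4 * d * 2 ^ (t0 - 1) < r :=
        Nat.lt_of_not_le (Nat.find_min hex (m := t0 - 1) (by omega))
      have he : 2 ^ t0 = 2 * 2 ^ (t0 - 1) := by
        rw [← pow_succ']; congr 1; omega
      calc 2 * (d * 2 ^ t0) = 4 * d * 2 ^ (t0 - 1) := by rw [he]; ring
        _ ≤ r := le_of_lt hlt
  -- cos at t0 is nonpositive
  have hpi := Real.pi_pos
  have hcos0 : Real.cos (2 * Real.pi * d * 2 ^ t0 / r) ≤ 0 := by
    apply Real.cos_nonpos_of_pi_div_two_le_of_le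
    · rw [le_div_iff₀ hrpos]
      have : (r:ℝ) ≤ 4 * d * 2 ^ t0 := by exact_mod_cast hPt0
      nlinarith
    · rw [div_le_iff₀ hrpos]
      have : 2 * ((d:ℝ) * 2 ^ t0) ≤ r := by exact_mod_cast hupper
      nlinarith
  -- bound the sum by M
  have hsum : ∑ t ∈ Finset.range (M + 1), Real.cos (2 * Real.pi * k * 2 ^ t / r)
      ≤ (M : ℝ) := by
    rw [Finset.sum_congr rfl fun t _ => hcos t]
    have ht0mem : t0 ∈ Finset.range (M + 1) := Finset.mem_range.2 (by omega)
    rw [← Finset.add_sum_erase _ _ ht0mem]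
    have hrest : ∑ t ∈ (Finset.range (M + 1)).erase t0,
        Real.cos (2 * Real.pi * d * 2 ^ t / r) ≤ (M : ℝ) := by
      calc _ ≤ ∑ t ∈ (Finset.range (M + 1)).erase t0, (1:ℝ) :=
            Finset.sum_le_sum fun t _ => Real.cos_le_one _
        _ = (M : ℝ) := by
            rw [Finset.sum_const, Finset.card_erase_of_mem ht0mem, Finset.card_range]
            simp
    linarith
  have hM1 : (0:ℝ) < (M:ℝ) + 1 := by positivity
  rw [div_le_iff₀ (by norm_num : (0:ℝ) < 2)]
  have h1 : (1 / ((M:ℝ) + 1)) * ∑ t ∈ Finset.range (M + 1),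
      Real.cos (2 * Real.pi * k * 2 ^ t / r) ≤ (M:ℝ) / ((M:ℝ) + 1) := by
    rw [one_div_mul_eq_div]
    gcongr
  have h2 : (M:ℝ) / ((M:ℝ) + 1) = 1 - 1 / ((M:ℝ) + 1) := by
    field_simp
    ring
  rw [h2] at h1
  have : (1 - 1 / (2 * ((M:ℝ) + 1))) * 2 = 2 - 1 / ((M:ℝ) + 1) := by
    field_simp
  rw [this]
  linarith
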